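/- Let q be a prime power. For every function φ : ℙ²(F_q) → ℙ¹(F_q), there exist homogeneous polynomials F, G ∈ F_q[x,y,z] of degree 3(q−1) with no common zero v ≠ 0 in F_q³, such that for every nonzero v ∈ F_q³ and every [s:t] ∈ ℙ¹(F_q), one has sF(v) + tG(v) = 0 if and only if φ([v]) = [s:t]. In particular, every partition of ℙ²(F_q) into q+1 (possibly empty) sets indexed by ℙ¹(F_q) is induced by a pencil of plane curves with no F_q-points in its base locus. -/

import Mathlib

open MvPolynomial

/-- The `F_q`-line in `ℙ²(F_q)` with (dual) coefficient vector `a`. -/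
def projLine (F : Type*) [Field F] (a : Fin 3 → F) :
    Set (Projectivization F (Fin 3 → F)) :=
  {P | ∑ i, a i * P.rep i = 0}

/-- A set of points of `ℙ²(F_q)` is a blocking set if it meets every `F_q`-line. -/
def IsBlockingSet (F : Type*) [Field F] (B : Set (Projectivization F (Fin 3 → F))) : Prop :=
  ∀ a : Fin 3 → F, a ≠ 0 → (B ∩ projLine F a).Nonempty

/-- The set of `F_q`-points of the member of the pencil `⟨P₁, P₂⟩` at `[s:t] ∈ ℙ¹(F_q)`. -/
def pencilMember (F : Type*) [Field F] (P₁ P₂ : MvPolynomial (Fin 3) F)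
    (st : Projectivization F (Fin 2 → F)) :
    Set (Projectivization F (Fin 3 → F)) :=
  {P | st.rep 0 * eval P.rep P₁ + st.rep 1 * eval P.rep P₂ = 0}

section Aux

variable {F : Type*} [Field F] [Fintype F]

/-- The indicator polynomial of the projective class of `w` (when `w i0 ≠ 0`). -/
noncomputable def hpoly (w : Fin 3 → F) (i0 : Fin 3) : MvPolynomial (Fin 3) F :=
  (X i0) ^ (Fintype.card F - 1) *
    ∏ j ∈ Finset.univ.erase i0,
      ((X i0) ^ (Fintype.card F - 1) -
        (C (w i0) * X j - C (w j) * X i0) ^ (Fintype.card F - 1))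

lemma hpoly_hom (w : Fin 3 → F) (i0 : Fin 3) :
    (hpoly w i0).IsHomogeneous (3 * (Fintype.card F - 1)) := by
  have hX : (X i0 : MvPolynomial (Fin 3) F).IsHomogeneous 1 := isHomogeneous_X F i0
  have hXd : ((X i0 : MvPolynomial (Fin 3) F) ^ (Fintype.card F - 1)).IsHomogeneous
      (Fintype.card F - 1) := by simpa using hX.pow (Fintype.card F - 1)
  have hlind : ∀ j : Fin 3,
      (((C (w i0) * X j - C (w j) * X i0 : MvPolynomial (Fin 3) F)) ^
        (Fintype.card F - 1)).IsHomogeneous (Fintype.card F - 1) := by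
    intro j
    simpa using (((isHomogeneous_C _ _).mul (isHomogeneous_X F j)).sub
      ((isHomogeneous_C _ _).mul (isHomogeneous_X F i0))).pow (Fintype.card F - 1)
  have hprod := MvPolynomial.IsHomogeneous.prod (Finset.univ.erase i0)
    (fun j => (X i0 : MvPolynomial (Fin 3) F) ^ (Fintype.card F - 1) -
        (C (w i0) * X j - C (w j) * X i0) ^ (Fintype.card F - 1))
    (fun _ => Fintype.card F - 1)
    (fun j _ => hXd.sub (hlind j))
  have hmul := hXd.mul hprod
  convert hmul using 1
  · rfl
  rw [Finset.sum_const, Finset.card_erase_of_mem (Finset.mem_univ i0)]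
  simp only [Finset.card_univ, Fintype.card_fin, smul_eq_mul]
  omega

lemma eval_hpoly (w v : Fin 3 → F) (i0 : Fin 3) :
    eval v (hpoly w i0) = v i0 ^ (Fintype.card F - 1) *
      ∏ j ∈ Finset.univ.erase i0,
        (v i0 ^ (Fintype.card F - 1) -
          (w i0 * v j - w j * v i0) ^ (Fintype.card F - 1)) := by
  simp [hpoly]

lemma eval_hpoly_smul (w : Fin 3 → F) (i0 : Fin 3) (h0 : w i0 ≠ 0) (c : F) (hc : c ≠ 0) :
    eval (c • w) (hpoly w i0) = 1 := by
  rw [eval_hpoly]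
  simp only [Pi.smul_apply, smul_eq_mul]
  rw [FiniteField.pow_card_sub_one_eq_one _ (mul_ne_zero hc h0), one_mul]
  apply Finset.prod_eq_one
  intro j hj
  have h2 : w i0 * (c * w j) - w j * (c * w i0) = 0 := by ring
  rw [h2, zero_pow (by have := Fintype.one_lt_card (α := F); omega), sub_zero]

lemma eval_hpoly_zero (w v : Fin 3 → F) (i0 : Fin 3) (h0 : w i0 ≠ 0)
    (hnp : ∀ c : F, c ≠ 0 → v ≠ c • w) :
    eval v (hpoly w i0) = 0 := by
  rw [eval_hpoly]
  by_cases hvi : v i0 = 0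
  · rw [hvi, zero_pow (by have := Fintype.one_lt_card (α := F); omega), zero_mul]
  · by_cases hall : ∀ j, w i0 * v j - w j * v i0 = 0
    · exfalso
      apply hnp (v i0 / w i0) (div_ne_zero hvi h0)
      funext j
      have hj := hall j
      simp only [Pi.smul_apply, smul_eq_mul]
      field_simp
      linear_combination hj
    · push_neg at hall
      obtain ⟨j, hj⟩ := hall
      have hji : j ≠ i0 := by
        rintro rfl
        simp [mul_comm] at hj
      apply mul_eq_zero_of_right
      apply Finset.prod_eq_zero (Finset.mem_erase.2 ⟨hji, Finset.mem_univ j⟩)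
      rw [FiniteField.pow_card_sub_one_eq_one _ hvi,
        FiniteField.pow_card_sub_one_eq_one _ hj, sub_self]

lemma det2 {a b : Fin 2 → F} (ha : a ≠ 0) (hb : b ≠ 0) :
    a 0 * b 1 - a 1 * b 0 = 0 ↔
      Projectivization.mk F b hb = Projectivization.mk F a ha := by
  rw [Projectivization.mk_eq_mk_iff]
  constructor
  · intro h
    rcases eq_or_ne (a 0) 0 with h0 | h0
    · have ha1 : a 1 ≠ 0 := by
        intro h1
        apply ha
        funext i; fin_cases i <;> simpa [h0, h1]
      have hb0 : b 0 = 0 := by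
        have h2 : a 1 * b 0 = 0 := by linear_combination b 1 * h0 - h
        exact (mul_eq_zero.mp h2).resolve_left ha1
      have hb1 : b 1 ≠ 0 := by
        intro h1
        apply hb
        funext i; fin_cases i <;> simpa [hb0, h1]
      refine ⟨Units.mk0 (b 1 / a 1) (div_ne_zero hb1 ha1), ?_⟩
      funext i; fin_cases i
      · simp [Units.smul_def, h0, hb0]
      · simp [Units.smul_def]
        field_simp
    · have hb0 : b 0 ≠ 0 := by
        intro hb0
        apply hb
        funext i; fin_cases i
        · simpa [hb0]
        · have h2 : a 0 * b 1 = 0 := by linear_combination h + a 1 * hb0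
          simpa using (mul_eq_zero.mp h2).resolve_left h0
      refine ⟨Units.mk0 (b 0 / a 0) (div_ne_zero hb0 h0), ?_⟩
      funext i; fin_cases i
      · simp [Units.smul_def]
        field_simp
      · simp [Units.smul_def]
        field_simp
        linear_combination -h
  · rintro ⟨u, rfl⟩
    simp only [Units.smul_def, Pi.smul_apply, smul_eq_mul]
    ring

end Aux

/-- **Proposition 2.1.** Every partition of `ℙ²(F_q)` indexed by `ℙ¹(F_q)` (encoded by a
function `φ : ℙ²(F_q) → ℙ¹(F_q)`) is induced by a pencil of plane curves of degree `3(q-1)`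
with no `F_q`-points in its base locus. -/
theorem stmt_2 (F : Type*) [Field F] [Fintype F]
    (φ : Projectivization F (Fin 3 → F) → Projectivization F (Fin 2 → F)) :
    ∃ P₁ P₂ : MvPolynomial (Fin 3) F,
      P₁.IsHomogeneous (3 * (Fintype.card F - 1)) ∧
      P₂.IsHomogeneous (3 * (Fintype.card F - 1)) ∧
      (∀ v : Fin 3 → F, v ≠ 0 → ¬(eval v P₁ = 0 ∧ eval v P₂ = 0)) ∧
      ∀ (v : Fin 3 → F) (hv : v ≠ 0) (st : Projectivization F (Fin 2 → F)),
        (st.rep 0 * eval v P₁ + st.rep 1 * eval v P₂ = 0 ↔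
          φ (Projectivization.mk F v hv) = st) := by
  classical
  haveI : Finite (Projectivization F (Fin 3 → F)) := Quotient.finite _
  haveI : Fintype (Projectivization F (Fin 3 → F)) := Fintype.ofFinite _
  have hrep : ∀ Q : Projectivization F (Fin 3 → F), ∃ i, Q.rep i ≠ 0 :=
    fun Q => Function.ne_iff.mp (Projectivization.rep_nonzero Q)
  choose ι hι using hrep
  -- key evaluation of the indicator polynomials
  have keyeval : ∀ (v : Fin 3 → F) (hv : v ≠ 0) (Q : Projectivization F (Fin 3 → F)),
      eval v (hpoly Q.rep (ι Q)) = if Projectivization.mk F v hv = Q then 1 else 0 := by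
    intro v hv Q
    split_ifs with h
    · rw [← Projectivization.mk_rep Q, Projectivization.mk_eq_mk_iff] at h
      obtain ⟨u, hu⟩ := h
      rw [← hu, Units.smul_def]
      exact eval_hpoly_smul _ _ (hι Q) u u.ne_zero
    · apply eval_hpoly_zero _ _ _ (hι Q)
      intro c hc hvc
      apply h
      rw [← Projectivization.mk_rep Q, Projectivization.mk_eq_mk_iff]
      exact ⟨Units.mk0 c hc, by simp [hvc, Units.smul_def]⟩
  have sumeval : ∀ (g : Projectivization F (Fin 3 → F) → F) (v : Fin 3 → F) (hv : v ≠ 0),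
      eval v (∑ Q, C (g Q) * hpoly Q.rep (ι Q)) = g (Projectivization.mk F v hv) := by
    intro g v hv
    rw [map_sum]
    simp only [map_mul, eval_C, keyeval v hv, mul_ite, mul_one, mul_zero]
    rw [Finset.sum_ite_eq]
    simp
  have sumhom : ∀ g : Projectivization F (Fin 3 → F) → F,
      (∑ Q, C (g Q) * hpoly Q.rep (ι Q)).IsHomogeneous (3 * (Fintype.card F - 1)) := by
    intro g
    apply MvPolynomial.IsHomogeneous.sum
    intro Q _
    exact (hpoly_hom Q.rep (ι Q)).C_mul _
  refine ⟨∑ Q, C ((φ Q).rep 1) * hpoly Q.rep (ι Q),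
          ∑ Q, C (-(φ Q).rep 0) * hpoly Q.rep (ι Q),
          sumhom _, sumhom _, ?_, ?_⟩
  · intro v hv ⟨h1, h2⟩
    rw [sumeval _ v hv] at h1 h2
    apply Projectivization.rep_nonzero (φ (Projectivization.mk F v hv))
    funext i; fin_cases i
    · simpa using h2
    · simpa using h1
  · intro v hv st
    rw [sumeval _ v hv, sumeval _ v hv]
    have hdet := det2 (Projectivization.rep_nonzero st)
      (Projectivization.rep_nonzero (φ (Projectivization.mk F v hv)))
    rw [Projectivization.mk_rep, Projectivization.mk_rep] at hdet
    rw [← hdet]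
    constructor <;> intro h <;> linear_combination h
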